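/- Existence of a stabilizing ordinal: For every x ∈ X there exists a countable ordinal γ such that for all σ, δ ∈ S^G_{<∞} with rng σ = rng δ: if B_α(x,σ) ≠ B_α(x,δ) for some countable ordinal α ≥ 1, then B_γ(x,σ) ≠ B_γ(x,δ). -/

import Mathlib

open Set Pointwise

noncomputable section

/-- `S_∞`, the group of all permutations of `ℕ`. -/
abbrev Sinf : Type := Equiv.Perm ℕ

/-- The topology of pointwise convergence on `S_∞`. -/
instance SinfTopology : TopologicalSpace Sinf :=
  TopologicalSpace.induced (fun g : Sinf => (g : ℕ → ℕ)) Pi.topologicalSpace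

/-- The graph of the restriction of a permutation `g` to a finite set `d`. -/
def restr (g : Sinf) (d : Finset ℕ) : Set (ℕ × ℕ) := {p | p.1 ∈ d ∧ g p.1 = p.2}

/-- The domain of a partial map coded by its graph. -/
def pdom (σ : Set (ℕ × ℕ)) : Set ℕ := Prod.fst '' σ

/-- The range of a partial map coded by its graph. -/
def prng (σ : Set (ℕ × ℕ)) : Set ℕ := Prod.snd '' σ

/-- `S^G_{<∞}`: graphs of restrictions of elements of `G` to finite subsets of `ℕ`. -/
def SGfin (G : Subgroup Sinf) : Set (Set (ℕ × ℕ)) :=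
  {σ | ∃ g ∈ G, ∃ d : Finset ℕ, σ = restr g d}

/-- `V^G_σ`: the elements of `G` extending the partial bijection `σ`. -/
def Vb (G : Subgroup Sinf) (σ : Set (ℕ × ℕ)) : Set G :=
  {g : G | ∀ p ∈ σ, (g : Sinf) p.1 = p.2}

/-- `V^G_c`: the pointwise stabilizer of `c ⊆ ℕ` in `G`. -/
def Vc (G : Subgroup Sinf) (c : Set ℕ) : Set G :=
  {g : G | ∀ k ∈ c, (g : Sinf) k = k}

/-- The identity partial bijection on `c`. -/
def idb (c : Set ℕ) : Set (ℕ × ℕ) := {p | p.1 ∈ c ∧ p.2 = p.1}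

/-- The composition `σ ∘ f`, restricted to `f⁻¹[dom σ]`. -/
def compR (σ : Set (ℕ × ℕ)) (f : Sinf) : Set (ℕ × ℕ) := {p | (f p.1, p.2) ∈ σ}

/-- The composition `f ∘ σ`. -/
def compL (f : Sinf) (σ : Set (ℕ × ℕ)) : Set (ℕ × ℕ) := {p | (p.1, f⁻¹ p.2) ∈ σ}

/-- The Borel classes `Σ⁰_α(X)`: `Σ⁰_1(X)` consists of the open sets, and for `α > 1`,
`Σ⁰_α(X)` consists of countable unions of sets whose complements lie in
`⋃_{1 ≤ β < α} Σ⁰_β(X)` (i.e. of sets from `⋃_{1 ≤ β < α} Π⁰_β(X)`). -/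
def SigmaB (X : Type*) [TopologicalSpace X] (α : Ordinal.{0}) : Set (Set X) :=
  if α ≤ 1 then {s | IsOpen s}
  else {s | ∃ f : ℕ → Set X,
      (∀ n, ∃ β : {γ : Ordinal.{0} // γ < α}, 1 ≤ β.1 ∧ (f n)ᶜ ∈ SigmaB X β.1) ∧
      s = ⋃ n, f n}
termination_by α
decreasing_by exact β.2

/-- The Borel classes `Π⁰_α(X)`: complements of sets in `Σ⁰_α(X)`. -/
def PiB (X : Type*) [TopologicalSpace X] (α : Ordinal.{0}) : Set (Set X) :=
  {s | sᶜ ∈ SigmaB X α}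

section Action

variable (G : Subgroup Sinf) {X : Type*} [TopologicalSpace X] [MulAction G X]

/-- The image `S • x` of a point under a set of group elements. -/
def setOrb (S : Set G) (x : X) : Set X := (fun g : G => g • x) '' S

/-- The image `S • B` of a set under a set of group elements. -/
def setSmul (S : Set G) (B : Set X) : Set X := ⋃ g ∈ S, g • B

/-- The `1`-sets `B₁(x, σ)`. -/
def BsetOne (A : ℕ → Set X) (σ : Set (ℕ × ℕ)) (x : X) : Set X :=
  (⋂ l, ⋂ (_ : (setOrb G (Vb G σ) x ∩ A l).Nonempty), setSmul G (Vc G (prng σ)) (A l)) ∩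
    (⋂ l, ⋂ (_ : setOrb G (Vb G σ) x ∩ A l = ∅), (setSmul G (Vc G (prng σ)) (A l))ᶜ)

/-- The successor step of the recursion defining the `α`-sets. -/
def BsetSucc (prev : Set (ℕ × ℕ) → X → Set X) (σ : Set (ℕ × ℕ)) (x : X) : Set X :=
  (⋂ b : Finset ℕ, ⋂ (_ : pdom σ ⊆ ↑b),
      ⋃ σ' ∈ SGfin G, ⋃ (_ : σ ⊆ σ') (_ : pdom σ' = ↑b), prev σ' x) ∩
    (⋂ a : Finset ℕ, ⋂ (_ : prng σ ⊆ ↑a),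
      ⋃ σ' ∈ SGfin G, ⋃ (_ : σ ⊆ σ') (_ : prng σ' = ↑a), prev σ' x)

/-- The `α`-sets `B_α(x, σ)`, for `α ≥ 1` (the value at `α = 0` is junk). -/
def Bset (A : ℕ → Set X) (α : Ordinal.{0}) : Set (ℕ × ℕ) → X → Set X :=
  @Ordinal.limitRecOn (fun _ => Set (ℕ × ℕ) → X → Set X) α
    (fun _ _ => univ)
    (fun o ih => if o = 0 then BsetOne G A else BsetSucc G ih)
    (fun o _ ih σ x => ⋂ β : Ordinal.{0}, ⋂ (hβ : β < o), ⋂ (_ : 1 ≤ β), ih β hβ σ x)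

/-- The family `𝓑^x_{<α}` consisting of the basic open sets together with all
`β`-sets of `x` for `1 ≤ β < α`. -/
def BltFam (A : ℕ → Set X) (x : X) (α : Ordinal.{0}) : Set (Set X) :=
  {B | (∃ l, B = A l) ∨
    ∃ β : Ordinal.{0}, 1 ≤ β ∧ β < α ∧ ∃ σ ∈ SGfin G, B = Bset G A β σ x}

/-- `γ^G_*(x)`: the least countable ordinal `γ` such that for all `σ, δ ∈ S^G_{<∞}`
with equal ranges, if `B_α(x,σ) ≠ B_α(x,δ)` for some countable ordinal `α ≥ 1`,
then already `B_γ(x,σ) ≠ B_γ(x,δ)`. -/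
def gammaStar (A : ℕ → Set X) (x : X) : Ordinal :=
  sInf {γ : Ordinal.{0} | γ.card ≤ Cardinal.aleph0 ∧
    ∀ σ ∈ SGfin G, ∀ δ ∈ SGfin G, prng σ = prng δ →
      (∃ α : Ordinal.{0}, 1 ≤ α ∧ α.card ≤ Cardinal.aleph0 ∧
        Bset G A α σ x ≠ Bset G A α δ x) →
      Bset G A γ σ x ≠ Bset G A γ δ x}

end Action

/-- The topology on a subset `S ⊆ X` generated by the traces on `S` of the members
of the family `F`. -/
def traceTop {X : Type*} (S : Set X) (F : Set (Set X)) : TopologicalSpace S :=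
  TopologicalSpace.generateFrom {u : Set S | ∃ B ∈ F, u = Subtype.val ⁻¹' B}

/-- The space of closed subsets of `Y`. -/
def EffrosSpace (Y : Type*) [TopologicalSpace Y] := {K : Set Y // IsClosed K}

/-- The Effros Borel structure on the space of closed subsets of `Y`. -/
def effrosSigma (Y : Type*) [TopologicalSpace Y] : MeasurableSpace (EffrosSpace Y) :=
  MeasurableSpace.generateFrom
    {S | ∃ U : Set Y, IsOpen U ∧ S = {K : EffrosSpace Y | (K.1 ∩ U).Nonempty}}

section Aux
set_option linter.unusedSectionVars false

variable (G : Subgroup Sinf) {X : Type*} [TopologicalSpace X] [MulAction G X]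

lemma one_mem_Vc (c : Set ℕ) : (1 : G) ∈ Vc G c := by
  intro k _; simp [Vc]

lemma mul_mem_Vc {c : Set ℕ} {u v : G} (hu : u ∈ Vc G c) (hv : v ∈ Vc G c) :
    u * v ∈ Vc G c := by
  intro k hk
  simp only [Subgroup.coe_mul, Equiv.Perm.mul_apply, hv k hk, hu k hk]

lemma inv_mem_Vc {c : Set ℕ} {u : G} (hu : u ∈ Vc G c) : u⁻¹ ∈ Vc G c := by
  intro k hk
  rw [Subgroup.coe_inv, Equiv.Perm.inv_eq_iff_eq, hu k hk]

lemma mem_Vc_conj_iff {c : Set ℕ} (g v : G) :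
    v ∈ Vc G (((g : Sinf)) '' c) ↔ g⁻¹ * v * g ∈ Vc G c := by
  constructor
  · intro hv k hk
    have := hv ((g : Sinf) k) ⟨k, hk, rfl⟩
    simp only [Subgroup.coe_mul, Subgroup.coe_inv, Equiv.Perm.mul_apply, this,
      Equiv.Perm.inv_eq_iff_eq]
  · rintro hv m ⟨k, hk, rfl⟩
    have := hv k hk
    simp only [Subgroup.coe_mul, Subgroup.coe_inv, Equiv.Perm.mul_apply] at this
    have : (v : Sinf) ((g : Sinf) k) = (g : Sinf) k := by
      have h2 := congrArg (g : Sinf) this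
      simpa using h2
    exact this

lemma mem_setSmul_iff {S : Set G} {B : Set X} {z : X} :
    z ∈ setSmul G S B ↔ ∃ u ∈ S, u⁻¹ • z ∈ B := by
  unfold setSmul
  simp only [mem_iUnion, exists_prop, mem_smul_set_iff_inv_smul_mem]

/-- level-1 relation: same 1-type over `c`. -/
def R1 (c : Set ℕ) (z w : X) : Prop := ∀ U : Set X, IsOpen U →
  (z ∈ setSmul G (Vc G c) U ↔ w ∈ setSmul G (Vc G c) U)

/-- successor step of the relation. -/
def RsuccF (prev : Set ℕ → X → X → Prop) (c : Set ℕ) (z w : X) : Prop :=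
  ∀ a : Finset ℕ, c ⊆ ↑a →
    (∃ u, u ∈ Vc G c ∧ prev ↑a z (u • w)) ∧ (∃ u, u ∈ Vc G c ∧ prev ↑a w (u • z))

/-- the transfinite family of relations mirroring `Bset`. -/
def Rrel (α : Ordinal.{0}) : Set ℕ → X → X → Prop :=
  @Ordinal.limitRecOn (fun _ => Set ℕ → X → X → Prop) α (fun _ _ _ => True)
    (fun o ih => if o = 0 then R1 G else RsuccF G ih)
    (fun o _ ih c z w => ∀ β : Ordinal.{0}, ∀ hβ : β < o, 1 ≤ β → ih β hβ c z w)

lemma Rrel_succ (o : Ordinal.{0}) :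
    Rrel (X := X) G (Order.succ o) = if o = 0 then R1 (G := G) (X := X) else RsuccF G (Rrel G o) :=
  Ordinal.limitRecOn_succ ..

lemma Rrel_one : Rrel (X := X) G (1 : Ordinal.{0}) = R1 (G := G) (X := X) := by
  rw [← Ordinal.succ_zero, Rrel_succ, if_pos rfl]

lemma Rrel_succ_of_ne {o : Ordinal.{0}} (ho : o ≠ 0) :
    Rrel (X := X) G (Order.succ o) = RsuccF G (Rrel G o) := by
  rw [Rrel_succ, if_neg ho]

lemma Rrel_limit {o : Ordinal.{0}} (ho : Order.IsSuccLimit o) :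
    Rrel (X := X) G o = fun c z w => ∀ β : Ordinal.{0}, β < o → 1 ≤ β → Rrel G β c z w := by
  unfold Rrel
  rw [Ordinal.limitRecOn_limit _ _ _ _ ho]

lemma Rrel_zero : Rrel (X := X) G (0 : Ordinal.{0}) = fun _ _ _ => True :=
  Ordinal.limitRecOn_zero ..

variable {G}

lemma Rrel_refl (α : Ordinal.{0}) : ∀ (c : Set ℕ) (z : X), Rrel G α c z z := by
  induction α using Ordinal.induction with
  | _ α IH =>
    rcases Ordinal.zero_or_succ_or_isSuccLimit α with h0 | ⟨o, rfl⟩ | hl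
    · subst h0; rw [Rrel_zero]; intro _ _; trivial
    · intro c z
      by_cases ho : o = 0
      · subst ho; rw [Rrel_succ, if_pos rfl]; intro U _; exact Iff.rfl
      · rw [Rrel_succ_of_ne G ho]
        intro a _
        refine ⟨⟨1, one_mem_Vc G c, ?_⟩, ⟨1, one_mem_Vc G c, ?_⟩⟩ <;>
          simpa using IH o (Order.lt_succ o) ↑a z
    · rw [Rrel_limit G hl]; intro c z β hβ _; exact IH β hβ c z

lemma Rrel_symm (α : Ordinal.{0}) : ∀ {c : Set ℕ} {z w : X},
    Rrel G α c z w → Rrel G α c w z := by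
  induction α using Ordinal.induction with
  | _ α IH =>
    rcases Ordinal.zero_or_succ_or_isSuccLimit α with h0 | ⟨o, rfl⟩ | hl
    · subst h0; rw [Rrel_zero]; intro _ _ _ _; trivial
    · intro c z w h
      by_cases ho : o = 0
      · subst ho; rw [Rrel_succ, if_pos rfl] at h ⊢
        intro U hU; exact (h U hU).symm
      · rw [Rrel_succ_of_ne G ho] at h ⊢
        intro a ha
        exact ⟨(h a ha).2, (h a ha).1⟩
    · intro c z w h
      rw [Rrel_limit G hl] at h ⊢
      intro β hβ h1; exact IH β hβ (h β hβ h1)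

lemma smul_setSmul_Vc_iff (g : G) (c : Set ℕ) (U : Set X) (y : X) :
    g • y ∈ setSmul G (Vc G ((g : Sinf) '' c)) U ↔ y ∈ setSmul G (Vc G c) ((g⁻¹ : G) • U) := by
  rw [mem_setSmul_iff, mem_setSmul_iff]
  constructor
  · rintro ⟨v, hv, hvU⟩
    refine ⟨g⁻¹ * v * g, (mem_Vc_conj_iff G g v).mp hv, ?_⟩
    rw [mem_smul_set_iff_inv_smul_mem]
    have : (g⁻¹)⁻¹ • (g⁻¹ * v * g)⁻¹ • y = v⁻¹ • g • y := by
      rw [smul_smul, smul_smul]; congr 1; group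
    rw [this]; exact hvU
  · rintro ⟨u, hu, huU⟩
    rw [mem_smul_set_iff_inv_smul_mem] at huU
    refine ⟨g * u * g⁻¹, (mem_Vc_conj_iff G g _).mpr (by simpa [mul_assoc] using hu), ?_⟩
    have : (g * u * g⁻¹)⁻¹ • g • y = (g⁻¹)⁻¹ • u⁻¹ • y := by
      rw [smul_smul, smul_smul]; congr 1; group
    rw [this]; exact huU

lemma image_coe_finset_image (g : Sinf) (a : Finset ℕ) :
    (g : ℕ → ℕ) '' ↑(a.image (g⁻¹ : Sinf)) = ↑a := by
  rw [Finset.coe_image, ← Set.image_comp]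
  have : ((g : ℕ → ℕ) ∘ ((g⁻¹ : Sinf) : ℕ → ℕ)) = id := by
    funext k; simp
  rw [this, Set.image_id]

lemma subset_coe_finset_image_of_inv {c : Set ℕ} {g : Sinf} {a : Finset ℕ}
    (h : ∀ k ∈ c, g k ∈ a) : c ⊆ ↑(a.image (g⁻¹ : Sinf)) := by
  intro k hk
  simp only [Finset.coe_image, Set.mem_image, Finset.mem_coe]
  exact ⟨g k, h k hk, by simp⟩

variable [ContinuousSMul G X]

lemma Rrel_perm (α : Ordinal.{0}) : ∀ (g : G) (c : Set ℕ) (z w : X),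
    Rrel G α c z w → Rrel G α ((g : Sinf) '' c) (g • z) (g • w) := by
  induction α using Ordinal.induction with
  | _ α IH =>
    rcases Ordinal.zero_or_succ_or_isSuccLimit α with h0 | ⟨o, rfl⟩ | hl
    · subst h0; rw [Rrel_zero]; intro _ _ _ _ _; trivial
    · intro g c z w h
      by_cases ho : o = 0
      · subst ho; rw [Rrel_succ, if_pos rfl] at h ⊢
        intro U hU
        rw [smul_setSmul_Vc_iff, smul_setSmul_Vc_iff]
        exact h _ (hU.smul g⁻¹)
      · rw [Rrel_succ_of_ne G ho] at h ⊢
        intro a' ha'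
        set a : Finset ℕ := a'.image ((((g : Sinf))⁻¹ : Sinf)) with ha_def
        have hca : c ⊆ ↑a := by
          refine subset_coe_finset_image_of_inv (fun k hk => ?_)
          exact_mod_cast ha' ⟨k, hk, rfl⟩
        have haa' : ((g : Sinf) : ℕ → ℕ) '' ↑a = ↑a' := image_coe_finset_image _ _
        obtain ⟨⟨u, huVc, hu⟩, ⟨u₂, hu₂Vc, hu₂⟩⟩ := h a hca
        constructor
        · refine ⟨g * u * g⁻¹, (mem_Vc_conj_iff G g _).mpr (by simpa [mul_assoc] using huVc), ?_⟩
          have := IH o (Order.lt_succ o) g ↑a z (u • w) hu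
          rw [haa'] at this
          have e : g • u • w = (g * u * g⁻¹) • g • w := by
            rw [smul_smul, smul_smul]; congr 1; group
          rwa [e] at this
        · refine ⟨g * u₂ * g⁻¹, (mem_Vc_conj_iff G g _).mpr (by simpa [mul_assoc] using hu₂Vc), ?_⟩
          have := IH o (Order.lt_succ o) g ↑a w (u₂ • z) hu₂
          rw [haa'] at this
          have e : g • u₂ • z = (g * u₂ * g⁻¹) • g • z := by
            rw [smul_smul, smul_smul]; congr 1; group
          rwa [e] at this
    · intro g c z w h
      rw [Rrel_limit G hl] at h ⊢
      intro β hβ h1; exact IH β hβ g c z w (h β hβ h1)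

lemma Rrel_trans (α : Ordinal.{0}) : ∀ {c : Set ℕ} {z w v : X},
    Rrel G α c z w → Rrel G α c w v → Rrel G α c z v := by
  induction α using Ordinal.induction with
  | _ α IH =>
    rcases Ordinal.zero_or_succ_or_isSuccLimit α with h0 | ⟨o, rfl⟩ | hl
    · subst h0; rw [Rrel_zero]; intro _ _ _ _ _ _; trivial
    · intro c z w v h1 h2
      by_cases ho : o = 0
      · subst ho; rw [Rrel_succ, if_pos rfl] at h1 h2 ⊢
        intro U hU; exact (h1 U hU).trans (h2 U hU)
      · rw [Rrel_succ_of_ne G ho] at h1 h2 ⊢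
        intro a ha
        constructor
        · obtain ⟨u₁, hu₁Vc, hu₁⟩ := (h1 a ha).1
          set a₂ : Finset ℕ := a.image ((((u₁ : Sinf))⁻¹ : Sinf)) with ha₂
          have hca₂ : c ⊆ ↑a₂ := by
            refine subset_coe_finset_image_of_inv (fun k hk => ?_)
            rw [hu₁Vc k hk]; exact ha hk
          obtain ⟨u₂, hu₂Vc, hu₂⟩ := (h2 a₂ hca₂).1
          have := Rrel_perm o u₁ ↑a₂ w (u₂ • v) hu₂
          rw [image_coe_finset_image] at this
          have e : u₁ • u₂ • v = (u₁ * u₂) • v := smul_smul ..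
          rw [e] at this
          exact ⟨u₁ * u₂, mul_mem_Vc (G := G) hu₁Vc hu₂Vc,
            IH o (Order.lt_succ o) hu₁ this⟩
        · obtain ⟨u₃, hu₃Vc, hu₃⟩ := (h2 a ha).2
          set a₄ : Finset ℕ := a.image ((((u₃ : Sinf))⁻¹ : Sinf)) with ha₄
          have hca₄ : c ⊆ ↑a₄ := by
            refine subset_coe_finset_image_of_inv (fun k hk => ?_)
            rw [hu₃Vc k hk]; exact ha hk
          obtain ⟨u₄, hu₄Vc, hu₄⟩ := (h1 a₄ hca₄).2
          have := Rrel_perm o u₃ ↑a₄ w (u₄ • z) hu₄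
          rw [image_coe_finset_image] at this
          have e : u₃ • u₄ • z = (u₃ * u₄) • z := smul_smul ..
          rw [e] at this
          exact ⟨u₃ * u₄, mul_mem_Vc (G := G) hu₃Vc hu₄Vc,
            IH o (Order.lt_succ o) hu₃ this⟩
    · intro c z w v h1 h2
      rw [Rrel_limit G hl] at h1 h2 ⊢
      intro β hβ hb1; exact IH β hβ (h1 β hβ hb1) (h2 β hβ hb1)

lemma Rrel_vinv (α : Ordinal.{0}) : ∀ (c : Set ℕ) (w : X) (u : G), u ∈ Vc G c →
    Rrel G α c (u • w) w := by
  induction α using Ordinal.induction with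
  | _ α IH =>
    rcases Ordinal.zero_or_succ_or_isSuccLimit α with h0 | ⟨o, rfl⟩ | hl
    · subst h0; rw [Rrel_zero]; intro _ _ _ _; trivial
    · intro c w u hu
      by_cases ho : o = 0
      · subst ho; rw [Rrel_succ, if_pos rfl]
        intro U hU
        rw [mem_setSmul_iff, mem_setSmul_iff]
        constructor
        · rintro ⟨v, hv, hvU⟩
          refine ⟨u⁻¹ * v, mul_mem_Vc (G := G) (inv_mem_Vc (G := G) hu) hv, ?_⟩
          have : (u⁻¹ * v)⁻¹ • w = v⁻¹ • u • w := by
            rw [smul_smul, mul_inv_rev, inv_inv]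
          rw [this]; exact hvU
        · rintro ⟨v, hv, hvU⟩
          refine ⟨u * v, mul_mem_Vc (G := G) hu hv, ?_⟩
          have : (u * v)⁻¹ • u • w = v⁻¹ • w := by
            rw [smul_smul]; congr 1; group
          rw [this]; exact hvU
      · rw [Rrel_succ_of_ne G ho]
        intro a _
        refine ⟨⟨u, hu, ?_⟩, ⟨u⁻¹, inv_mem_Vc (G := G) hu, ?_⟩⟩
        · exact Rrel_refl o ↑a (u • w)
        · have : u⁻¹ • u • w = w := inv_smul_smul u w
          rw [this]; exact Rrel_refl o ↑a w
    · intro c w u hu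
      rw [Rrel_limit G hl]
      intro β hβ _; exact IH β hβ c w u hu

lemma Rrel_step {c : Set ℕ} (hc : ∃ s : Finset ℕ, ↑s = c) (o : Ordinal.{0}) {z w : X}
    (h : Rrel G (Order.succ o) c z w) : Rrel G o c z w := by
  by_cases ho : o = 0
  · subst ho; rw [Rrel_zero]; trivial
  · rw [Rrel_succ_of_ne G ho] at h
    obtain ⟨s, rfl⟩ := hc
    obtain ⟨u, huVc, hu⟩ := (h s subset_rfl).1
    exact Rrel_trans o hu (Rrel_vinv o _ w u huVc)

lemma Rrel_mono {c : Set ℕ} (hc : ∃ s : Finset ℕ, ↑s = c) :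
    ∀ (β α : Ordinal.{0}), α ≤ β → ∀ {z w : X}, Rrel G β c z w → Rrel G α c z w := by
  intro β
  induction β using Ordinal.induction with
  | _ β IH =>
    intro α hαβ z w h
    rcases eq_or_lt_of_le hαβ with rfl | hlt
    · exact h
    rcases Ordinal.zero_or_succ_or_isSuccLimit β with h0 | ⟨o, rfl⟩ | hl
    · exact absurd (h0 ▸ hlt) (by simp)
    · exact IH o (Order.lt_succ o) α (Order.lt_succ_iff.mp hlt) (Rrel_step hc o h)
    · by_cases hα0 : α = 0
      · subst hα0; rw [Rrel_zero]; trivial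
      · rw [Rrel_limit G hl] at h
        exact h α hlt (Ordinal.one_le_iff_ne_zero.mpr hα0)


-- graph lemmas
lemma pdom_restr (g : Sinf) (d : Finset ℕ) : pdom (restr g d) = ↑d := by
  ext k; constructor
  · rintro ⟨p, ⟨hp1, _⟩, rfl⟩; exact hp1
  · intro hk; exact ⟨(k, g k), ⟨hk, rfl⟩, rfl⟩

lemma prng_restr (g : Sinf) (d : Finset ℕ) : prng (restr g d) = (g : ℕ → ℕ) '' ↑d := by
  ext m; constructor
  · rintro ⟨p, ⟨hp1, hp2⟩, rfl⟩; exact ⟨p.1, hp1, hp2⟩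
  · rintro ⟨k, hk, rfl⟩; exact ⟨(k, g k), ⟨hk, rfl⟩, rfl⟩

lemma restr_mem_SGfin (g : G) (d : Finset ℕ) : restr (g : Sinf) d ∈ SGfin G :=
  ⟨(g : Sinf), g.2, d, rfl⟩

lemma mem_Vb_restr (g : G) (d : Finset ℕ) : g ∈ Vb G (restr (g : Sinf) d) :=
  fun _ hp => hp.2

lemma Vb_antitone {σ σ' : Set (ℕ × ℕ)} (h : σ ⊆ σ') : Vb G σ' ⊆ Vb G σ :=
  fun g hg p hp => hg p (h hp)

lemma mul_inv_mem_Vc_prng {σ : Set (ℕ × ℕ)} {g' h : G}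
    (hg : g' ∈ Vb G σ) (hh : h ∈ Vb G σ) : g' * h⁻¹ ∈ Vc G (prng σ) := by
  rintro m ⟨p, hp, rfl⟩
  have h1 : (h : Sinf) p.1 = p.2 := hh p hp
  have h2 : (g' : Sinf) p.1 = p.2 := hg p hp
  have h3 : ((h : Sinf))⁻¹ p.2 = p.1 := by rw [Equiv.Perm.inv_eq_iff_eq, h1]
  simp only [Subgroup.coe_mul, Subgroup.coe_inv, Equiv.Perm.mul_apply, h3, h2]

lemma vc_mul_mem_Vb {σ : Set (ℕ × ℕ)} {u h : G} (hu : u ∈ Vc G (prng σ))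
    (hh : h ∈ Vb G σ) : u * h ∈ Vb G σ := by
  intro p hp
  simp only [Subgroup.coe_mul, Equiv.Perm.mul_apply, hh p hp]
  exact hu p.2 ⟨p, hp, rfl⟩

lemma prng_finite {σ : Set (ℕ × ℕ)} (hσ : σ ∈ SGfin G) :
    ∃ s : Finset ℕ, ↑s = prng σ := by
  obtain ⟨g, _, d, rfl⟩ := hσ
  exact ⟨d.image g, by rw [Finset.coe_image, prng_restr]⟩

lemma subset_restr {σ : Set (ℕ × ℕ)} {h : G} (hh : h ∈ Vb G σ) {b : Finset ℕ}
    (hb : pdom σ ⊆ ↑b) : σ ⊆ restr (h : Sinf) b :=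
  fun p hp => ⟨hb ⟨p, hp, rfl⟩, hh p hp⟩

-- Bset equation lemmas
variable (G)

lemma Bset_succ (A : ℕ → Set X) (o : Ordinal.{0}) :
    Bset G A (Order.succ o) = if o = 0 then BsetOne G A else BsetSucc G (Bset G A o) :=
  Ordinal.limitRecOn_succ ..

lemma Bset_one (A : ℕ → Set X) : Bset G A 1 = BsetOne G A := by
  rw [← Ordinal.succ_zero, Bset_succ, if_pos rfl]

lemma Bset_succ_of_ne (A : ℕ → Set X) {o : Ordinal.{0}} (ho : o ≠ 0) :
    Bset G A (Order.succ o) = BsetSucc G (Bset G A o) := by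
  rw [Bset_succ, if_neg ho]

lemma Bset_limit (A : ℕ → Set X) {o : Ordinal.{0}} (ho : Order.IsSuccLimit o) :
    Bset G A o = fun σ x => ⋂ β : Ordinal.{0}, ⋂ (hβ : β < o), ⋂ (_ : 1 ≤ β),
      Bset G A β σ x :=
  Ordinal.limitRecOn_limit _ _ _ _ ho

variable {G}

/-- Main lemma: the `α`-set of `σ` is the `Rrel α (prng σ)`-class of `h • x`
for any `h ∈ G` extending `σ`. -/
lemma Bset_eq_class (A : ℕ → Set X)
    (hbasis : TopologicalSpace.IsTopologicalBasis (Set.range A)) (x : X) :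
    ∀ α : Ordinal.{0}, 1 ≤ α → ∀ σ ∈ SGfin G, ∀ h : G, h ∈ Vb G σ →
      Bset G A α σ x = {z | Rrel G α (prng σ) z (h • x)} := by
  intro α
  induction α using Ordinal.induction with
  | _ α IH =>
    intro hα1 σ hσ h hh
    rcases Ordinal.zero_or_succ_or_isSuccLimit α with h0 | ⟨o, rfl⟩ | hl
    · subst h0; exact absurd hα1 (by simp [Ordinal.one_le_iff_ne_zero])
    · by_cases ho : o = 0
      · -- α = 1
        subst ho
        rw [Ordinal.succ_zero, Bset_one, Rrel_one]
        set c := prng σ with hc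
        have key : ∀ l, (setOrb G (Vb G σ) x ∩ A l).Nonempty ↔
            h • x ∈ setSmul G (Vc G c) (A l) := by
          intro l
          constructor
          · rintro ⟨y, ⟨g', hg', rfl⟩, hyA⟩
            rw [mem_setSmul_iff]
            refine ⟨h * g'⁻¹, mul_inv_mem_Vc_prng hh hg', ?_⟩
            have e : (h * g'⁻¹)⁻¹ • h • x = g' • x := by
              rw [smul_smul]; congr 1; group
            rw [e]; exact hyA
          · intro hx
            rw [mem_setSmul_iff] at hx
            obtain ⟨u, hu, huA⟩ := hx
            exact ⟨(u⁻¹ * h) • x, ⟨u⁻¹ * h, vc_mul_mem_Vb (inv_mem_Vc (G := G) hu) hh, rfl⟩,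
              by rw [mul_smul]; exact huA⟩
        ext z
        simp only [BsetOne, mem_inter_iff, mem_iInter, mem_compl_iff, mem_setOf_eq]
        constructor
        · rintro ⟨hpos, hneg⟩
          have hzl : ∀ l, z ∈ setSmul G (Vc G c) (A l) ↔
              h • x ∈ setSmul G (Vc G c) (A l) := by
            intro l
            by_cases hne : (setOrb G (Vb G σ) x ∩ A l).Nonempty
            · exact iff_of_true (hpos l hne) ((key l).mp hne)
            · exact iff_of_false (hneg l (not_nonempty_iff_eq_empty.mp hne))
                (fun hxx => hne ((key l).mpr hxx))
          intro U hU
          have transfer : ∀ y y' : X,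
              (∀ l, y ∈ setSmul G (Vc G c) (A l) → y' ∈ setSmul G (Vc G c) (A l)) →
              y ∈ setSmul G (Vc G c) U → y' ∈ setSmul G (Vc G c) U := by
            intro y y' hy hyU
            rw [mem_setSmul_iff] at hyU
            obtain ⟨u, hu, huU⟩ := hyU
            obtain ⟨B, hB, hmem, hBU⟩ := hbasis.exists_subset_of_mem_open huU hU
            obtain ⟨l, rfl⟩ := hB
            have h1 : y ∈ setSmul G (Vc G c) (A l) := (mem_setSmul_iff G).mpr ⟨u, hu, hmem⟩
            have h2 := hy l h1
            rw [mem_setSmul_iff] at h2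
            obtain ⟨v, hv, hvA⟩ := h2
            exact (mem_setSmul_iff G).mpr ⟨v, hv, hBU hvA⟩
          exact ⟨transfer z (h • x) (fun l => (hzl l).mp),
            transfer (h • x) z (fun l => (hzl l).mpr)⟩
        · intro hR
          constructor
          · intro l hne
            exact (hR (A l) (hbasis.isOpen ⟨l, rfl⟩)).mpr ((key l).mp hne)
          · intro l he hz
            have := (hR (A l) (hbasis.isOpen ⟨l, rfl⟩)).mp hz
            exact (not_nonempty_iff_eq_empty.mpr he) ((key l).mpr this)
      · -- successor case, o ≠ 0
        have ho1 : (1 : Ordinal) ≤ o := Ordinal.one_le_iff_ne_zero.mpr ho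
        rw [Bset_succ_of_ne G A ho, Rrel_succ_of_ne G ho]
        ext z
        simp only [BsetSucc, mem_inter_iff, mem_iInter, mem_iUnion, exists_prop,
          mem_setOf_eq]
        constructor
        · rintro ⟨hdom, hrng⟩ a hca
          constructor
          · -- range transfer
            obtain ⟨σ', hσ'S, hσσ', hprng', hz⟩ := hrng a hca
            obtain ⟨g0, hg0, d', hrep⟩ := id hσ'S
            set g' : G := ⟨g0, hg0⟩ with hg'def
            have hg'Vb : g' ∈ Vb G σ' := by rw [hrep]; exact mem_Vb_restr g' d'
            have hz' : Rrel G o (prng σ') z (g' • x) := by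
              have h9 := hz
              rw [IH o (Order.lt_succ o) ho1 σ' hσ'S g' hg'Vb] at h9
              exact h9
            rw [hprng'] at hz'
            refine ⟨g' * h⁻¹,
              mul_inv_mem_Vc_prng (Vb_antitone hσσ' hg'Vb) hh, ?_⟩
            have e : (g' * h⁻¹) • h • x = g' • x := by
              rw [smul_smul]; congr 1; group
            rw [e]; exact hz'
          · -- dom transfer
            set b : Finset ℕ := a.image (((h : Sinf))⁻¹ : Sinf) with hbdef
            have hdb : pdom σ ⊆ ↑b := by
              refine subset_coe_finset_image_of_inv ?_
              rintro k ⟨p, hp, rfl⟩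
              rw [hh p hp]
              exact_mod_cast hca ⟨p, hp, rfl⟩
            obtain ⟨σ', hσ'S, hσσ', hpdom', hz⟩ := hdom b hdb
            obtain ⟨g0, hg0, d', hrep⟩ := id hσ'S
            set g' : G := ⟨g0, hg0⟩ with hg'def
            have hg'Vb : g' ∈ Vb G σ' := by rw [hrep]; exact mem_Vb_restr g' d'
            have hz' : Rrel G o (prng σ') z (g' • x) := by
              have h9 := hz
              rw [IH o (Order.lt_succ o) ho1 σ' hσ'S g' hg'Vb] at h9
              exact h9
            have hd'b : (↑d' : Set ℕ) = ↑b := by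
              rw [hrep, pdom_restr] at hpdom'; exact hpdom'
            have hprng' : prng σ' = ((g' : Sinf) : ℕ → ℕ) '' ↑b := by
              rw [hrep, prng_restr, hd'b]
            rw [hprng'] at hz'
            set u₀ : G := h * g'⁻¹ with hu₀def
            have hu₀Vc : u₀ ∈ Vc G (prng σ) :=
              mul_inv_mem_Vc_prng hh (Vb_antitone hσσ' hg'Vb)
            have hperm := Rrel_perm o u₀ _ _ _ hz'
            have hset : ((u₀ : Sinf) : ℕ → ℕ) '' (((g' : Sinf) : ℕ → ℕ) '' ↑b) = ↑a := by
              rw [Set.image_image]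
              have e1 : (fun k => (u₀ : Sinf) ((g' : Sinf) k)) = (((h : Sinf) : ℕ → ℕ)) := by
                funext k
                simp [hu₀def, Subgroup.coe_mul, Subgroup.coe_inv, Equiv.Perm.mul_apply]
              rw [e1, hbdef]
              exact image_coe_finset_image (h : Sinf) a
            rw [hset] at hperm
            have e2 : u₀ • g' • x = h • x := by
              rw [smul_smul, hu₀def]; congr 1; group
            rw [e2] at hperm
            exact ⟨u₀, hu₀Vc, Rrel_symm o hperm⟩
        · intro hR
          constructor
          · -- dom part
            intro b hdb
            set a : Finset ℕ := b.image ((h : Sinf) : ℕ → ℕ) with hadef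
            have hca : prng σ ⊆ ↑a := by
              rintro m ⟨p, hp, rfl⟩
              rw [← hh p hp]
              simp only [hadef, Finset.coe_image, Set.mem_image, Finset.mem_coe]
              exact ⟨p.1, by exact_mod_cast hdb ⟨p, hp, rfl⟩, rfl⟩
            obtain ⟨u, hu, hR2⟩ := (hR a hca).2
            have hVb : u⁻¹ * h ∈ Vb G σ := vc_mul_mem_Vb (inv_mem_Vc (G := G) hu) hh
            refine ⟨restr (↑(u⁻¹ * h) : Sinf) b, restr_mem_SGfin _ _,
              subset_restr hVb hdb, pdom_restr _ _, ?_⟩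
            rw [IH o (Order.lt_succ o) ho1 _ (restr_mem_SGfin (u⁻¹ * h) b) (u⁻¹ * h)
              (mem_Vb_restr _ _)]
            have hperm := Rrel_perm o u⁻¹ _ _ _ (Rrel_symm o hR2)
            have hset : (((u⁻¹ : G) : Sinf) : ℕ → ℕ) '' ↑a =
                prng (restr (↑(u⁻¹ * h) : Sinf) b) := by
              rw [prng_restr, hadef, Finset.coe_image, Set.image_image]
              apply congrFun
              apply congrArg
              funext k
              simp [Subgroup.coe_mul, Subgroup.coe_inv, Equiv.Perm.mul_apply]
            rw [hset] at hperm
            have e1 : u⁻¹ • u • z = z := inv_smul_smul u z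
            have e2 : u⁻¹ • h • x = (u⁻¹ * h) • x := smul_smul ..
            rw [e1, e2] at hperm
            exact hperm
          · -- range part
            intro a hca
            obtain ⟨u, hu, hR1⟩ := (hR a hca).1
            set g' : G := u * h with hg'def
            set b : Finset ℕ := a.image (((g' : Sinf))⁻¹ : Sinf) with hbdef
            have hσsub : σ ⊆ restr (g' : Sinf) b := by
              intro p hp
              have e1 : (g' : Sinf) p.1 = p.2 := by
                simp only [hg'def, Subgroup.coe_mul, Equiv.Perm.mul_apply, hh p hp]
                exact hu p.2 ⟨p, hp, rfl⟩
              refine ⟨?_, e1⟩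
              have hp2a : p.2 ∈ a := by exact_mod_cast hca ⟨p, hp, rfl⟩
              simp only [hbdef, Finset.mem_image]
              exact ⟨p.2, hp2a, by rw [← e1]; simp⟩
            have hprng : prng (restr (g' : Sinf) b) = ↑a := by
              rw [prng_restr, hbdef]
              exact image_coe_finset_image (g' : Sinf) a
            refine ⟨restr (g' : Sinf) b, restr_mem_SGfin _ _, hσsub, hprng, ?_⟩
            rw [IH o (Order.lt_succ o) ho1 _ (restr_mem_SGfin g' b) g' (mem_Vb_restr _ _)]
            rw [mem_setOf_eq, hprng, hg'def]
            rw [mul_smul]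
            exact hR1
    · -- limit case
      rw [Bset_limit G A hl, Rrel_limit G hl]
      ext z
      simp only [mem_iInter, mem_setOf_eq]
      constructor
      · intro hz β hβ hβ1
        have h1 := hz β hβ hβ1
        rw [IH β hβ hβ1 σ hσ h hh] at h1
        exact h1
      · intro hz β hβ hβ1
        rw [IH β hβ hβ1 σ hσ h hh]
        exact hz β hβ hβ1

/-- Differences of `α`-sets propagate upward. -/
lemma Bset_ne_mono (A : ℕ → Set X)
    (hbasis : TopologicalSpace.IsTopologicalBasis (Set.range A)) (x : X)
    {α β : Ordinal.{0}} (hα : 1 ≤ α) (hαβ : α ≤ β)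
    {σ δ : Set (ℕ × ℕ)} (hσ : σ ∈ SGfin G) (hδ : δ ∈ SGfin G)
    (hrng : prng σ = prng δ)
    (hne : Bset G A α σ x ≠ Bset G A α δ x) :
    Bset G A β σ x ≠ Bset G A β δ x := by
  have hβ1 : (1 : Ordinal) ≤ β := le_trans hα hαβ
  obtain ⟨g1, hg1, d1, e1⟩ := id hσ
  obtain ⟨g2, hg2, d2, e2⟩ := id hδ
  set h : G := ⟨g1, hg1⟩ with hhdef
  set k : G := ⟨g2, hg2⟩ with hkdef
  have hhVb : h ∈ Vb G σ := by rw [e1]; exact mem_Vb_restr h d1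
  have hkVb : k ∈ Vb G δ := by rw [e2]; exact mem_Vb_restr k d2
  intro heq
  apply hne
  have eβσ := Bset_eq_class A hbasis x β hβ1 σ hσ h hhVb
  have eβδ := Bset_eq_class A hbasis x β hβ1 δ hδ k hkVb
  have hkx : k • x ∈ Bset G A β δ x := by
    rw [eβδ]; exact Rrel_refl β _ _
  rw [← heq, eβσ, mem_setOf_eq] at hkx
  have hfin : ∃ s : Finset ℕ, ↑s = prng σ := prng_finite hσ
  have hrel : Rrel G α (prng σ) (k • x) (h • x) := Rrel_mono hfin β α hαβ hkx
  rw [Bset_eq_class A hbasis x α hα σ hσ h hhVb,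
    Bset_eq_class A hbasis x α hα δ hδ k hkVb, ← hrng]
  ext z
  simp only [mem_setOf_eq]
  constructor
  · intro hz; exact Rrel_trans α hz (Rrel_symm α hrel)
  · intro hz; exact Rrel_trans α hz hrel

lemma SGfin_countable : (SGfin G).Countable := by
  apply Set.Countable.mono _
    (Set.countable_setOf_finite_subset (Set.countable_univ (α := ℕ × ℕ)))
  rintro σ ⟨g, _, d, rfl⟩
  refine ⟨?_, subset_univ _⟩
  have e : restr g d = (fun k => (k, g k)) '' ↑d := by
    ext p
    constructor
    · rintro ⟨h1, h2⟩
      exact ⟨p.1, h1, by simp [Prod.ext_iff, h2]⟩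
    · rintro ⟨kk, hk, rfl⟩
      exact ⟨hk, rfl⟩
  rw [e]
  exact (d.finite_toSet).image _

end Aux

/-- Existence of a stabilizing ordinal. -/
theorem exists_stabilizing_ordinal
    (G : Subgroup Sinf) (hGclosed : IsClosed (G : Set Sinf))
    {X : Type*} [TopologicalSpace X] [PolishSpace X] [MulAction G X] [ContinuousSMul G X]
    (A : ℕ → Set X) (hbasis : TopologicalSpace.IsTopologicalBasis (Set.range A))
    (hbasisInv : ∀ l, ∃ c : Finset ℕ, ∀ g ∈ Vc G (↑c : Set ℕ), g • A l = A l)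
    (x : X) :
    ∃ γ : Ordinal.{0}, γ.card ≤ Cardinal.aleph0 ∧
      ∀ σ ∈ SGfin G, ∀ δ ∈ SGfin G, prng σ = prng δ →
        (∃ α : Ordinal.{0}, 1 ≤ α ∧ α.card ≤ Cardinal.aleph0 ∧
          Bset G A α σ x ≠ Bset G A α δ x) →
        Bset G A γ σ x ≠ Bset G A γ δ x := by
  classical
  set T : Set (Set (ℕ × ℕ) × Set (ℕ × ℕ)) :=
    {p | p.1 ∈ SGfin G ∧ p.2 ∈ SGfin G ∧ prng p.1 = prng p.2 ∧
      ∃ α : Ordinal.{0}, 1 ≤ α ∧ α.card ≤ Cardinal.aleph0 ∧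
        Bset G A α p.1 x ≠ Bset G A α p.2 x} with hTdef
  have hTc : T.Countable := by
    apply Set.Countable.mono _ ((SGfin_countable (G := G)).prod (SGfin_countable (G := G)))
    rintro p ⟨h1, h2, _⟩
    exact ⟨h1, h2⟩
  have hex : ∀ p : T, ∃ α : Ordinal.{0}, 1 ≤ α ∧ α.card ≤ Cardinal.aleph0 ∧
      Bset G A α p.1.1 x ≠ Bset G A α p.1.2 x := fun p => p.2.2.2.2
  choose F hF1 hF2 hF3 using hex
  refine ⟨⨆ p : T, F p, ?_, ?_⟩
  · have hlt : (⨆ p : T, F p) < (Cardinal.aleph 1).ord := by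
      apply Ordinal.iSup_lt_ord
      · rw [Cardinal.isRegular_aleph_one.cof_eq]
        have : Countable T := Set.countable_coe_iff.mpr hTc
        exact lt_of_le_of_lt Cardinal.mk_le_aleph0 Cardinal.aleph0_lt_aleph_one
      · intro p
        exact Cardinal.lt_ord.mpr (lt_of_le_of_lt (hF2 p) Cardinal.aleph0_lt_aleph_one)
    have := Cardinal.lt_ord.mp hlt
    rwa [← Cardinal.succ_aleph0, Order.lt_succ_iff] at this
  · intro σ hσ δ hδ hrng hdiff
    have hpT : (σ, δ) ∈ T := ⟨hσ, hδ, hrng, hdiff⟩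
    have hle : F ⟨(σ, δ), hpT⟩ ≤ ⨆ p : T, F p :=
      le_ciSup (Ordinal.bddAbove_range F) ⟨(σ, δ), hpT⟩
    exact Bset_ne_mono A hbasis x (hF1 ⟨(σ, δ), hpT⟩) hle hσ hδ hrng (hF3 ⟨(σ, δ), hpT⟩)
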